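/- If the formula ϑ(x̄,ȳ) exemplifies SOP₂ in T, then ϑ(x̄,ȳ) exemplifies SOP₂'' in T. -/

import Mathlib

open Classical FirstOrder FirstOrder.Language Cardinal

namespace SopPaper

/-- An element of `2^{<λ}`: a sequence of zeroes and ones of some ordinal length `< λ`
(with value `false` beyond its length, to make the representation canonical). -/
structure BSeq (lam : Cardinal.{0}) where
  len : Ordinal.{0}
  len_lt : len < lam.ord
  val : Ordinal.{0} → Bool
  val_eq : ∀ β, len ≤ β → val β = false

namespace BSeq

/-- The (strict) initial-segment relation `◁` on `2^{<λ}`. -/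
def Lt {lam : Cardinal.{0}} (η ν : BSeq lam) : Prop :=
  η.len < ν.len ∧ ∀ β, β < η.len → η.val β = ν.val β

/-- `η` has successor length. -/
def SuccLen {lam : Cardinal.{0}} (η : BSeq lam) : Prop :=
  ∃ γ : Ordinal.{0}, η.len = γ + 1

end BSeq

/-- For a branch `f ∈ 2^λ` (represented as a boolean function on ordinals) and `γ < λ`,
the restriction `f ↾ (γ+1)`, an element of `2^{<λ}` of successor length. -/
noncomputable def branchRestrict (lam : Cardinal.{0}) (hlam : ℵ₀ ≤ lam)
    (f : Ordinal.{0} → Bool) (γ : Ordinal.{0}) (hγ : γ < lam.ord) : BSeq lam where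
  len := γ + 1
  len_lt := by
    have := (Cardinal.isSuccLimit_ord hlam).succ_lt hγ
    simpa [Order.succ_eq_add_one] using this
  val := fun β => if β < γ + 1 then f β else false
  val_eq := by
    intro β h
    rw [if_neg (not_lt.2 h)]

/-- `φ(x̄, ȳ)` exemplifies SOP₂'' in the structure `M`: for some `n` and some infinite
cardinal `λ` there is a family `⟨ā_η̄⟩` indexed by `◁`-increasing `n`-tuples of elements of
`2^{<λ}` of successor length such that:
(a) for every branch `f ∈ 2^λ`, the set
    `{φ(x̄, ā_{⟨f↾(α₀+1),…,f↾(α_{n−1}+1)⟩}) : α₀ < … < α_{n−1} < λ}` is consistent;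
(b) for every large enough `m`, whenever `h` is a one-to-one map from `m^{≤n}` into `2^{<λ}`
    preserving `◁` and incomparability, the set
    `{φ(x̄, ā_{⟨h(η↾1),…,h(η↾n)⟩}) : η ∈ m^n}` is inconsistent. -/
def ExemplifiesSOP2pp {L : FirstOrder.Language.{0, 0}} {mx : ℕ} {β : Type}
    (φ : L.Formula (Fin mx ⊕ β)) (M : Type*) [L.Structure M] : Prop :=
  ∃ (n : ℕ) (lam : Cardinal.{0}) (hlam : ℵ₀ ≤ lam)
    (a : (Fin n → BSeq lam) → β → M),
    (∀ f : Ordinal.{0} → Bool, ∃ e : Fin mx → M,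
      ∀ (α : Fin n → Ordinal.{0}) (hα : ∀ i, α i < lam.ord), StrictMono α →
        φ.Realize (Sum.elim e (a fun i => branchRestrict lam hlam f (α i) (hα i)))) ∧
    (∃ m₀ : ℕ, ∀ m : ℕ, m₀ ≤ m →
      ∀ h : {l : List (Fin m) // l.length ≤ n} → BSeq lam,
        Function.Injective h →
        (∀ l₁ l₂ : {l : List (Fin m) // l.length ≤ n},
            l₁.1 <+: l₂.1 → l₁.1 ≠ l₂.1 → (h l₁).Lt (h l₂)) →
        (∀ l₁ l₂ : {l : List (Fin m) // l.length ≤ n},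
            ¬ l₁.1 <+: l₂.1 → ¬ l₂.1 <+: l₁.1 →
            ¬ (h l₁).Lt (h l₂) ∧ ¬ (h l₂).Lt (h l₁) ∧ h l₁ ≠ h l₂) →
        ¬ ∃ e : Fin mx → M, ∀ η : Fin n → Fin m,
            φ.Realize (Sum.elim e (a fun ℓ =>
              h ⟨(List.ofFn η).take (ℓ.1 + 1), by
                  rw [List.length_take, List.length_ofFn]
                  exact min_le_right _ _⟩)))

/-- The restriction `ρ ↾ k` of an infinite branch `ρ ∈ 2^ω` to a finite sequence. -/
def restrict (ρ : ℕ → Bool) (k : ℕ) : List Bool :=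
  List.ofFn fun i : Fin k => ρ i

/-- `φ(x̄, ȳ)` exemplifies SOP₂ in the structure `M`. -/
def ExemplifiesSOP2 {L : FirstOrder.Language.{0, 0}} {mx : ℕ} {β : Type}
    (φ : L.Formula (Fin mx ⊕ β)) (M : Type*) [L.Structure M] : Prop :=
  ∃ a : List Bool → β → M,
    (∀ ρ : ℕ → Bool, ∃ e : Fin mx → M, ∀ k : ℕ,
        φ.Realize (Sum.elim e (a (restrict ρ k)))) ∧
    ∀ η ν : List Bool, ¬ η <+: ν → ¬ ν <+: η →
      ¬ ∃ e : Fin mx → M,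
          φ.Realize (Sum.elim e (a η)) ∧ φ.Realize (Sum.elim e (a ν))


section Aux

lemma bseq_len_lt_omega (η : BSeq ℵ₀) : η.len < Ordinal.omega0 := by
  have := η.len_lt
  rwa [Cardinal.ord_aleph0] at this

/-- The finite length of an element of `2^{<ℵ₀}`. -/
noncomputable def natLen (η : BSeq ℵ₀) : ℕ :=
  Classical.choose (Ordinal.lt_omega0.1 (bseq_len_lt_omega η))

lemma natLen_spec (η : BSeq ℵ₀) : η.len = (natLen η : Ordinal) :=
  Classical.choose_spec (Ordinal.lt_omega0.1 (bseq_len_lt_omega η))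

/-- An element of `2^{<ℵ₀}` as a `List Bool`. -/
noncomputable def toList (η : BSeq ℵ₀) : List Bool :=
  List.ofFn fun i : Fin (natLen η) => η.val i

lemma toList_length (η : BSeq ℵ₀) : (toList η).length = natLen η := by
  simp [toList]

lemma toList_getElem (η : BSeq ℵ₀) (i : ℕ) (hi : i < (toList η).length) :
    (toList η)[i] = η.val i := by
  simp [toList]

lemma bseq_ext {η ν : BSeq ℵ₀} (h1 : η.len = ν.len)
    (h2 : ∀ β, β < η.len → η.val β = ν.val β) : η = ν := by
  obtain ⟨l₁, hl₁, v₁, hv₁⟩ := η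
  obtain ⟨l₂, hl₂, v₂, hv₂⟩ := ν
  dsimp at h1 h2
  subst h1
  congr 1
  funext β
  rcases lt_or_ge β l₁ with hβ | hβ
  · exact h2 β hβ
  · rw [hv₁ β hβ, hv₂ β hβ]

lemma toList_inj {η ν : BSeq ℵ₀} (h : toList η = toList ν) : η = ν := by
  have hlen : natLen η = natLen ν := by
    rw [← toList_length, ← toList_length, h]
  refine bseq_ext ?_ ?_
  · rw [natLen_spec, natLen_spec, hlen]
  · intro β hβ
    rw [natLen_spec] at hβ
    obtain ⟨i, rfl⟩ := Ordinal.lt_omega0.1 (hβ.trans (Ordinal.nat_lt_omega0 _))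
    have hi : i < natLen η := by exact_mod_cast hβ
    have hi' : i < (toList η).length := by rwa [toList_length]
    have hi'' : i < (toList ν).length := by rw [toList_length, ← hlen]; exact hi
    have h2 : (toList η)[i]'hi' = (toList ν)[i]'hi'' := List.getElem_of_eq h hi'
    rw [← toList_getElem η i hi', ← toList_getElem ν i hi'', h2]

lemma lt_of_prefix {η ν : BSeq ℵ₀} (h : toList η <+: toList ν) :
    η = ν ∨ η.Lt ν := by
  rcases eq_or_lt_of_le (h.length_le) with hl | hl
  · exact Or.inl (toList_inj (h.eq_of_length hl))
  · refine Or.inr ⟨?_, ?_⟩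
    · rw [natLen_spec η, natLen_spec ν]
      rw [toList_length, toList_length] at hl
      exact_mod_cast hl
    · intro β hβ
      rw [natLen_spec] at hβ
      obtain ⟨i, rfl⟩ := Ordinal.lt_omega0.1 (hβ.trans (Ordinal.nat_lt_omega0 _))
      have hi : i < (toList η).length := by
        rw [toList_length]; exact_mod_cast hβ
      have := h.getElem hi
      rw [toList_getElem η i hi, toList_getElem ν i (hi.trans_le h.length_le)] at this
      exact this

lemma toList_branchRestrict (f : Ordinal.{0} → Bool) (k : ℕ) (γ : Ordinal.{0})
    (hγ : γ < Cardinal.aleph0.ord) (hk : γ = (k : Ordinal)) :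
    toList (branchRestrict ℵ₀ le_rfl f γ hγ) = restrict (fun n => f n) (k + 1) := by
  subst hk
  have hlen : natLen (branchRestrict ℵ₀ le_rfl f k hγ) = k + 1 := by
    have := (natLen_spec (branchRestrict ℵ₀ le_rfl f k hγ)).symm
    have h2 : ((natLen (branchRestrict ℵ₀ le_rfl f k hγ) : ℕ) : Ordinal)
        = ((k + 1 : ℕ) : Ordinal) := by
      rw [this]; show ((k : Ordinal) + 1) = _; push_cast; ring
    exact_mod_cast h2
  apply List.ext_getElem
  · rw [toList_length, hlen]; simp [restrict]
  · intro i h1 h2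
    rw [toList_getElem]
    have hi : i < k + 1 := by rwa [toList_length, hlen] at h1
    show (if (i : Ordinal) < (k : Ordinal) + 1 then f i else false) = _
    rw [if_pos (by exact_mod_cast hi)]
    simp only [restrict, List.getElem_ofFn]

end Aux

/-- If the formula `ϑ(x̄,ȳ)` exemplifies SOP₂ in `T` (i.e. in the monster
model `M`), then `ϑ(x̄,ȳ)` exemplifies SOP₂'' in `T`. -/
theorem SOP2pp_of_SOP2 {L : FirstOrder.Language.{0, 0}} {mx my : ℕ}
    (ϑ : L.Formula (Fin mx ⊕ Fin my)) (M : Type*) [L.Structure M]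
    (h : ExemplifiesSOP2 ϑ M) : ExemplifiesSOP2pp ϑ M := by
  obtain ⟨a₀, ha, hb⟩ := h
  refine ⟨1, ℵ₀, le_rfl, fun g => a₀ (toList (g 0)), ?_, ?_⟩
  · intro f
    obtain ⟨e, he⟩ := ha fun n => f n
    refine ⟨e, fun α hα _ => ?_⟩
    obtain ⟨k, hk⟩ := Ordinal.lt_omega0.1 (bseq_len_lt_omega ⟨α 0, hα 0, fun _ => false, fun _ _ => rfl⟩)
    have key : toList (branchRestrict ℵ₀ le_rfl f (α 0) (hα 0))
        = restrict (fun n => f n) (k + 1) := toList_branchRestrict f k (α 0) (hα 0) hk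
    have := he (k + 1)
    show ϑ.Realize (Sum.elim e (a₀ (toList (branchRestrict ℵ₀ le_rfl f (α 0) (hα 0)))))
    rwa [key]
  · refine ⟨2, fun m hm hmap hinj hpre hinc => ?_⟩
    rintro ⟨e, he⟩
    have h01 : (⟨0, by omega⟩ : Fin m) ≠ ⟨1, by omega⟩ := by simp
    set l₀ : {l : List (Fin m) // l.length ≤ 1} := ⟨[⟨0, by omega⟩], by simp⟩ with hl₀
    set l₁ : {l : List (Fin m) // l.length ≤ 1} := ⟨[⟨1, by omega⟩], by simp⟩ with hl₁
    have hp1 : ¬ l₀.1 <+: l₁.1 := by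
      intro hp
      have := hp.eq_of_length (by simp [hl₀, hl₁])
      simp [hl₀, hl₁] at this
    have hp2 : ¬ l₁.1 <+: l₀.1 := by
      intro hp
      have := hp.eq_of_length (by simp [hl₀, hl₁])
      simp [hl₀, hl₁] at this
    obtain ⟨h3, h4, h5⟩ := hinc l₀ l₁ hp1 hp2
    have hA : ¬ toList (hmap l₀) <+: toList (hmap l₁) := by
      intro hp
      rcases lt_of_prefix hp with h | h
      · exact h5 (toList_inj (congrArg toList h))
      · exact h3 h
    have hB : ¬ toList (hmap l₁) <+: toList (hmap l₀) := by
      intro hp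
      rcases lt_of_prefix hp with h | h
      · exact h5 (toList_inj (congrArg toList h)).symm
      · exact h4 h
    refine hb _ _ hA hB ⟨e, ?_, ?_⟩
    · have := he fun _ => (⟨0, by omega⟩ : Fin m)
      convert this using 3
      rfl
    · have := he fun _ => (⟨1, by omega⟩ : Fin m)
      convert this using 3
      rfl

end SopPaper
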